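/- Let G be an r-regular simple graph on a finite vertex set V with |V| = n, and let l be a natural number. Then the number of pairs (u, w), where u ∈ V and w is a closed walk in G from u to u of length 2l whose support is a palindrome (i.e. w.support.reverse = w.support, equivalently w coincides with its conjugate walk), equals n · r^l. -/

import Mathlib

open SimpleGraph

section Aux

variable {V : Type*} {G : SimpleGraph V}

/-- In a simple graph, a walk is determined by its support. -/
theorem walk_support_injective {u v : V} (p : G.Walk u v) :
    ∀ q : G.Walk u v, p.support = q.support → p = q := by
  induction p with
  | nil =>
    intro q h
    cases q with
    | nil => rfl
    | cons hb q =>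
      exfalso
      have := congrArg List.length h
      simp [SimpleGraph.Walk.length_support] at this
  | @cons u x v ha p ih =>
    intro q h
    cases q with
    | nil =>
      exfalso
      have := congrArg List.length h
      simp [SimpleGraph.Walk.length_support] at this
    | @cons _ y _ hb q =>
      have h2 : p.support = q.support := by simpa using h
      have hxy : x = y := by
        have := congrArg List.head? h2
        rw [SimpleGraph.Walk.support_eq_cons p, SimpleGraph.Walk.support_eq_cons q] at this
        rw [List.head?_cons, List.head?_cons] at this
        exact Option.some.inj this
      subst hxy
      rw [ih q h2]

/-- A walk can be split at any index. -/
theorem walk_exists_split :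
    ∀ (n : ℕ) {u v : V} (w : G.Walk u v), n ≤ w.length →
      ∃ (x : V) (p : G.Walk u x) (q : G.Walk x v), p.length = n ∧ w = p.append q
  | 0, u, _, w, _ => ⟨u, .nil, w, rfl, (w.nil_append).symm⟩
  | n + 1, _, _, .nil, h => by simp at h
  | n + 1, _, _, .cons ha w, h => by
    obtain ⟨x, p, q, hl, he⟩ := walk_exists_split n w (by simpa using h)
    exact ⟨x, .cons ha p, q, by simp [hl], by rw [SimpleGraph.Walk.cons_append, ← he]⟩

theorem walk_support_take {u x v : V} (p : G.Walk u x) (q : G.Walk x v) :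
    (p.append q).support.take (p.length + 1) = p.support := by
  rw [SimpleGraph.Walk.support_append,
    List.take_left' (by rw [SimpleGraph.Walk.length_support])]

theorem walk_end_eq_of_support_eq {u v v' : V} (p : G.Walk u v) (p' : G.Walk u v')
    (h : p.support = p'.support) : v = v' := by
  have : p.support.reverse.head? = p'.support.reverse.head? := by rw [h]
  rw [← SimpleGraph.Walk.support_reverse, ← SimpleGraph.Walk.support_reverse] at this
  rw [SimpleGraph.Walk.support_eq_cons p.reverse,
    SimpleGraph.Walk.support_eq_cons p'.reverse] at this
  simpa using this

theorem rowsum_adjMatrix_pow [Fintype V] [DecidableEq V] [DecidableRel G.Adj]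
    {r : ℕ} (hreg : G.IsRegularOfDegree r) (l : ℕ) (u : V) :
    ∑ v, (G.adjMatrix ℕ ^ l) u v = r ^ l := by
  induction l generalizing u with
  | zero => simp [Matrix.one_apply]
  | succ n ih =>
    rw [pow_succ']
    simp only [Matrix.mul_apply]
    rw [Finset.sum_comm]
    calc ∑ k, ∑ v, G.adjMatrix ℕ u k * (G.adjMatrix ℕ ^ n) k v
        = ∑ k, G.adjMatrix ℕ u k * r ^ n := by
          refine Finset.sum_congr rfl fun k _ => ?_
          rw [← Finset.mul_sum, ih k]
      _ = (∑ k, G.adjMatrix ℕ u k) * r ^ n := by rw [Finset.sum_mul]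
      _ = r ^ (n + 1) := by
          have : ∑ k, G.adjMatrix ℕ u k = r := by
            simp only [SimpleGraph.adjMatrix_apply, Finset.sum_boole]
            rw [← SimpleGraph.neighborFinset_eq_filter]
            exact_mod_cast hreg u
          rw [this, pow_succ, mul_comm]

end Aux

/-- In an `r`-regular simple graph on `n` vertices, the number of pairs `(u, w)` where
`w` is a closed walk at `u` of length `2l` with palindromic support (i.e. `w` coincides
with its conjugate walk) equals `n · r^l`. -/
theorem card_palindromic_closed_walks {V : Type*} [Fintype V] [DecidableEq V]
    (G : SimpleGraph V) [DecidableRel G.Adj] (r : ℕ) (hreg : G.IsRegularOfDegree r)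
    (l : ℕ) :
    Nat.card (Σ u : V, {w : G.Walk u u // w.length = 2 * l ∧ w.support.reverse = w.support}) =
      Fintype.card V * r ^ l := by
  classical
  haveI : ∀ u v : V, Fintype {p : G.Walk u v // p.length = l} :=
    fun u v => G.fintypeSetWalkLength u v l
  -- the folding map
  set F : (Σ u : V, Σ v : V, {p : G.Walk u v // p.length = l}) →
      (Σ u : V, {w : G.Walk u u // w.length = 2 * l ∧ w.support.reverse = w.support}) :=
    fun x => ⟨x.1, x.2.2.1.append x.2.2.1.reverse, by
      simp [x.2.2.2, two_mul], by
      have hrev : (x.2.2.1.append x.2.2.1.reverse).reverse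
          = x.2.2.1.append x.2.2.1.reverse := by
        rw [SimpleGraph.Walk.reverse_append, SimpleGraph.Walk.reverse_reverse]
      rw [← SimpleGraph.Walk.support_reverse, hrev]⟩ with hF
  have hbij : Function.Bijective F := by
    constructor
    · rintro ⟨u, v, p, hp⟩ ⟨u', v', p', hp'⟩ h
      simp only [hF, Sigma.mk.inj_iff] at h
      obtain ⟨rfl, h⟩ := h
      have hw : p.append p.reverse = p'.append p'.reverse := by
        simpa [Subtype.heq_iff_coe_eq] using h
      have hsupp : p.support = p'.support := by
        have := congrArg (fun w => SimpleGraph.Walk.support w) hw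
        calc p.support = (p.append p.reverse).support.take (l + 1) := by
              rw [← hp]; exact (walk_support_take p p.reverse).symm
          _ = (p'.append p'.reverse).support.take (l + 1) := by rw [hw]
          _ = p'.support := by rw [← hp']; exact walk_support_take p' p'.reverse
      obtain rfl : v = v' := walk_end_eq_of_support_eq p p' hsupp
      obtain rfl : p = p' := walk_support_injective p p' hsupp
      rfl
    · rintro ⟨u, w, hlen, hpal⟩
      obtain ⟨x, p, q, hpl, rfl⟩ := walk_exists_split l w (by rw [hlen]; omega)
      have hql : q.length = l := by
        rw [SimpleGraph.Walk.length_append, hpl] at hlen; omega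
      have hq : q = p.reverse := by
        have h1 : (p.append q).reverse = q.reverse.append p.reverse :=
          SimpleGraph.Walk.reverse_append p q
        have hqr : q.reverse.length = l := by simp [hql]
        have hsupp : q.reverse.support = p.support := by
          calc q.reverse.support
              = (q.reverse.append p.reverse).support.take (l + 1) := by
                rw [← hqr]
                exact (walk_support_take q.reverse p.reverse).symm
            _ = (p.append q).support.reverse.take (l + 1) := by
                rw [← h1, SimpleGraph.Walk.support_reverse]
            _ = (p.append q).support.take (l + 1) := by rw [hpal]
            _ = p.support := by rw [← hpl]; exact walk_support_take p q
        have : q.reverse = p := walk_support_injective q.reverse p hsupp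
        rw [← this, SimpleGraph.Walk.reverse_reverse]
      subst hq
      exact ⟨⟨u, x, p, hpl⟩, rfl⟩
  rw [← Nat.card_eq_of_bijective F hbij, Nat.card_eq_fintype_card]
  rw [Fintype.card_sigma]
  have hcard : ∀ u : V, Fintype.card (Σ v : V, {p : G.Walk u v // p.length = l}) = r ^ l := by
    intro u
    rw [Fintype.card_sigma]
    calc ∑ v, Fintype.card {p : G.Walk u v // p.length = l}
        = ∑ v, (G.adjMatrix ℕ ^ l) u v := by
          refine Finset.sum_congr rfl fun v _ => ?_
          rw [SimpleGraph.adjMatrix_pow_apply_eq_card_walk, Nat.cast_id]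
          exact Fintype.card_congr (Equiv.subtypeEquivRight fun p => Iff.rfl)
      _ = r ^ l := rowsum_adjMatrix_pow hreg l u
  simp [hcard]
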